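/- Let q be a prime, let F_{q^r} be the field with q^r elements with Frobenius automorphism φ : x ↦ x^q, let k divide r and r/k divide n, let the cyclic group C_n = ⟨σ⟩ act on F_{q^r} via η(σ) = φ^k, and set m := gcd(q^k − 1, nk/r). If m divides r/k, then every η-compatible automorphism of C_n (ψ ∈ Aut(C_n) with η ∘ ψ = η) acts trivially on H²_η(C_n, F_{q^r}^*); hence the number of orbits of the Aut_η(C_n)-pullback action on H²_η(C_n, F_{q^r}^*) equals m. -/

import Mathlib

def IsTwoCocycle {G F : Type*} [Group G] [Field F] (η : G →* RingAut F)
    (f : G → G → Fˣ) : Prop :=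
  ∀ g h k : G, η g (f h k : F) * ((f g (h * k) : Fˣ) : F) =
    ((f g h : Fˣ) : F) * ((f (g * h) k : Fˣ) : F)

def IsTwoCoboundary {G F : Type*} [Group G] [Field F] (η : G →* RingAut F)
    (f : G → G → Fˣ) : Prop :=
  ∃ r : G → Fˣ, ∀ g h : G,
    (f g h : F) = (r g : F) * η g (r h : F) * (((r (g * h))⁻¹ : Fˣ) : F)

def Cohomologous {G F : Type*} [Group G] [Field F] (η : G →* RingAut F)
    (f₁ f₂ : G → G → Fˣ) : Prop :=
  IsTwoCoboundary η fun g h => f₁ g h * (f₂ g h)⁻¹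

/-- The group of 2-cocycles, as a subgroup of all functions `G → G → Fˣ`. -/
def twoCocycles {G F : Type*} [Group G] [Field F] (η : G →* RingAut F) :
    Subgroup (G → G → Fˣ) where
  carrier := {f | IsTwoCocycle η f}
  one_mem' := by intro g h k; simp
  mul_mem' := by
    intro a b ha hb g h k
    simp only [Pi.mul_apply, Units.val_mul, map_mul]
    rw [mul_mul_mul_comm, ha g h k, hb g h k, mul_mul_mul_comm]
  inv_mem' := by
    intro a ha g h k
    simp only [Pi.inv_apply, Units.val_inv_eq_inv_val, map_inv₀]
    rw [← mul_inv, ← mul_inv, ha g h k]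

/-- The group of 2-coboundaries, as a subgroup of all functions `G → G → Fˣ`. -/
def twoCoboundaries {G F : Type*} [Group G] [Field F] (η : G →* RingAut F) :
    Subgroup (G → G → Fˣ) where
  carrier := {f | IsTwoCoboundary η f}
  one_mem' := ⟨1, by intro g h; simp⟩
  mul_mem' := by
    rintro a b ⟨r, hr⟩ ⟨t, ht⟩
    refine ⟨r * t, fun g h => ?_⟩
    simp only [Pi.mul_apply, Units.val_mul, map_mul, mul_inv, hr g h, ht g h,
      Units.val_inv_eq_inv_val]
    ring
  inv_mem' := by
    rintro a ⟨r, hr⟩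
    refine ⟨r⁻¹, fun g h => ?_⟩
    simp only [Pi.inv_apply, Units.val_inv_eq_inv_val, map_inv₀, hr g h, inv_inv, mul_inv]

/-- The second cohomology group `H²_η(G, F^*)`: 2-cocycles modulo 2-coboundaries. -/
abbrev H2 {G F : Type*} [Group G] [Field F] (η : G →* RingAut F) :=
  twoCocycles η ⧸ ((twoCoboundaries η).subgroupOf (twoCocycles η))

/-- The norm map `x ↦ ∏_{i=0}^{n-1} σ^i(x)` on `F^*`. -/
def cyclicNormHom {G F : Type*} [Group G] [Field F] (η : G →* RingAut F) (σ : G) (n : ℕ) :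
    Fˣ →* Fˣ where
  toFun x := ∏ i ∈ Finset.range n, Units.map (η (σ ^ i)).toMonoidHom x
  map_one' := by simp
  map_mul' x y := by simp [Finset.prod_mul_distrib]

/-- The subgroup `(F^*)^{C_n}` of elements of `F^*` fixed by the action. -/
def fixedUnits {G F : Type*} [Group G] [Field F] (η : G →* RingAut F) :
    Subgroup Fˣ where
  carrier := {x | ∀ g : G, η g (x : F) = (x : F)}
  one_mem' := by intro g; simp
  mul_mem' := by intro a b ha hb g; simp [ha g, hb g]
  inv_mem' := by intro a ha g; simp [ha g]

/-- The orbit relation on `H²_η(G, F^*)` induced by the pullback action of the group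
of `η`-compatible automorphisms of `G`. -/
def pullbackRel {G F : Type*} [Group G] [Field F] (η : G →* RingAut F)
    (c₁ c₂ : H2 η) : Prop :=
  ∃ ψ : MulAut G, (∀ g : G, η (ψ g) = η g) ∧
    ∃ (f : G → G → Fˣ) (hf : f ∈ twoCocycles η)
      (hf' : (fun g g' => f (ψ g) (ψ g')) ∈ twoCocycles η),
      c₁ = QuotientGroup.mk ⟨f, hf⟩ ∧
      c₂ = QuotientGroup.mk ⟨fun g g' => f (ψ g) (ψ g'), hf'⟩

section Cyclic

open Finset

variable {G F : Type*} [Group G] [Field F]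

/-- The unit-level action. -/
def uMap (η : G →* RingAut F) (g : G) : Fˣ →* Fˣ := Units.map (η g).toMonoidHom

lemma uMap_val (η : G →* RingAut F) (g : G) (x : Fˣ) : ((uMap η g x : Fˣ) : F) = η g (x : F) := rfl

lemma uMap_mul_apply (η : G →* RingAut F) (g h : G) (x : Fˣ) :
    uMap η (g * h) x = uMap η g (uMap η h x) := by
  apply Units.ext; simp [uMap_val, map_mul]

variable (n : ℕ) (σ : G) (η : G →* RingAut F)

lemma shift1 (hord : orderOf σ = n) (u : G → Fˣ) :
    ∏ i ∈ range n, u (σ ^ (i + 1)) = ∏ i ∈ range n, u (σ ^ i) := by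
  have h1 := Finset.prod_range_succ' (fun i => u (σ ^ i)) n
  have h2 := Finset.prod_range_succ (fun i => u (σ ^ i)) n
  have h3 : σ ^ n = σ ^ 0 := by
    simp [← hord, pow_orderOf_eq_one]
  rw [h2, h3] at h1
  exact mul_right_cancel h1.symm

lemma shiftm (hord : orderOf σ = n) (u : G → Fˣ) (m : ℕ) :
    ∏ i ∈ range n, u (σ ^ (m + i)) = ∏ i ∈ range n, u (σ ^ i) := by
  induction m with
  | zero => simp
  | succ m ih =>
    have := shift1 n σ hord (fun g => u (σ ^ m * g))
    simp only [← pow_add] at this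
    calc ∏ i ∈ range n, u (σ ^ (m + 1 + i)) = ∏ i ∈ range n, u (σ ^ (m + (i + 1))) := by
          apply Finset.prod_congr rfl; intro i _; ring_nf
        _ = ∏ i ∈ range n, u (σ ^ (m + i)) := this
        _ = _ := ih

lemma exists_ind (hn : 0 < n) (hord : orderOf σ = n) (hgen : ∀ g : G, g ∈ Subgroup.zpowers σ)
    (g : G) : ∃ i, i < n ∧ σ ^ i = g := by
  obtain ⟨z, hz⟩ := hgen g
  refine ⟨(z % (n : ℤ)).toNat, ?_, ?_⟩
  · have h0 : 0 ≤ z % (n : ℤ) := Int.emod_nonneg z (by exact_mod_cast hn.ne')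
    have h1 : z % (n : ℤ) < n := Int.emod_lt_of_pos z (by exact_mod_cast hn)
    omega
  · have h0 : 0 ≤ z % (n : ℤ) := Int.emod_nonneg z (by exact_mod_cast hn.ne')
    have : σ ^ ((z % (n : ℤ)).toNat : ℤ) = σ ^ z := by
      rw [Int.toNat_of_nonneg h0, ← hord, zpow_mod_orderOf]
    rw [← zpow_natCast, this]; exact hz

variable {n σ}

/-- discrete log -/
noncomputable def ind (hn : 0 < n) (hord : orderOf σ = n) (hgen : ∀ g : G, g ∈ Subgroup.zpowers σ)
    (g : G) : ℕ := (exists_ind n σ hn hord hgen g).choose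

lemma ind_lt (hn : 0 < n) (hord : orderOf σ = n) (hgen : ∀ g : G, g ∈ Subgroup.zpowers σ) (g : G) :
    ind hn hord hgen g < n := (exists_ind n σ hn hord hgen g).choose_spec.1

lemma pow_ind (hn : 0 < n) (hord : orderOf σ = n) (hgen : ∀ g : G, g ∈ Subgroup.zpowers σ) (g : G) :
    σ ^ (ind hn hord hgen g) = g := (exists_ind n σ hn hord hgen g).choose_spec.2

lemma ind_eq (hn : 0 < n) (hord : orderOf σ = n) (hgen : ∀ g : G, g ∈ Subgroup.zpowers σ)
    {i : ℕ} (hi : i < n) {g : G} (hg : σ ^ i = g) : ind hn hord hgen g = i := by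
  apply pow_injOn_Iio_orderOf (x := σ) (by simp [hord, ind_lt hn hord hgen g]) (by simp [hord, hi])
  simp only []
  rw [pow_ind hn hord hgen g, hg]

lemma ind_pow (hn : 0 < n) (hord : orderOf σ = n) (hgen : ∀ g : G, g ∈ Subgroup.zpowers σ)
    {i : ℕ} (hi : i < n) : ind hn hord hgen (σ ^ i) = i := ind_eq hn hord hgen hi rfl

lemma ind_pow_mod (hn : 0 < n) (hord : orderOf σ = n) (hgen : ∀ g : G, g ∈ Subgroup.zpowers σ)
    (i : ℕ) : ind hn hord hgen (σ ^ i) = i % n := by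
  apply ind_eq hn hord hgen (Nat.mod_lt _ hn)
  rw [← hord, pow_mod_orderOf]

lemma ind_mul (hn : 0 < n) (hord : orderOf σ = n) (hgen : ∀ g : G, g ∈ Subgroup.zpowers σ)
    (g h : G) : ind hn hord hgen (g * h) = (ind hn hord hgen g + ind hn hord hgen h) % n := by
  conv_lhs => rw [← pow_ind hn hord hgen g, ← pow_ind hn hord hgen h, ← pow_add]
  exact ind_pow_mod hn hord hgen _

lemma ind_one (hn : 0 < n) (hord : orderOf σ = n) (hgen : ∀ g : G, g ∈ Subgroup.zpowers σ) :
    ind hn hord hgen (1 : G) = 0 := ind_eq hn hord hgen hn (pow_zero σ)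

lemma ind_sigma (hn : 1 < n) (hord : orderOf σ = n) (hgen : ∀ g : G, g ∈ Subgroup.zpowers σ) :
    ind (by omega) hord hgen σ = 1 := ind_eq _ hord hgen hn (pow_one σ)

end Cyclic
section CocycleAlg

open Finset

variable {G F : Type*} [Group G] [Field F] {η : G →* RingAut F}

lemma cocycle_units {f : G → G → Fˣ} (hf : IsTwoCocycle η f) (g h k : G) :
    uMap η g (f h k) * f g (h * k) = f g h * f (g * h) k := by
  apply Units.ext
  simpa [uMap_val] using hf g h k

lemma coboundary_iff_units {f : G → G → Fˣ} :
    IsTwoCoboundary η f ↔ ∃ r : G → Fˣ, ∀ g h : G,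
      f g h = r g * uMap η g (r h) * (r (g * h))⁻¹ := by
  constructor
  · rintro ⟨r, hr⟩
    exact ⟨r, fun g h => Units.ext (by simpa [uMap_val] using hr g h)⟩
  · rintro ⟨r, hr⟩
    refine ⟨r, fun g h => ?_⟩
    rw [hr g h]
    simp [uMap_val]

lemma coboundary_isCocycle {f : G → G → Fˣ} (hf : IsTwoCoboundary η f) :
    IsTwoCocycle η f := by
  rw [coboundary_iff_units] at hf
  obtain ⟨r, hr⟩ := hf
  intro g h k
  have e1 : ∀ (g' : G) (x : Fˣ), η g' (x : F) = ((uMap η g' x : Fˣ) : F) := fun _ _ => rfl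
  rw [hr g h, hr (g*h) k, hr h k, hr g (h*k)]
  simp only [e1, map_mul, map_inv, uMap_mul_apply, mul_assoc, mul_inv_rev]
  push_cast
  have n0 : ∀ x : Fˣ, ((x : F) ≠ 0) := fun x => x.ne_zero
  field_simp

variable (n : ℕ) (σ : G)

/-- The distinguished invariant of a 2-cochain. -/
def Phi (η : G →* RingAut F) (f : G → G → Fˣ) : Fˣ := ∏ i ∈ range n, f (σ ^ i) σ

lemma Phi_mul (f f' : G → G → Fˣ) : Phi n σ η (f * f') = Phi n σ η f * Phi n σ η f' := by
  simp [Phi, Finset.prod_mul_distrib]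

lemma Phi_inv (f : G → G → Fˣ) : Phi n σ η f⁻¹ = (Phi n σ η f)⁻¹ := by
  simp [Phi]

variable {n}

/-- Step B : the invariant is fixed by the action. -/
lemma Phi_mem_fixed (hn : 0 < n) (hord : orderOf σ = n) (hgen : ∀ g : G, g ∈ Subgroup.zpowers σ)
    {f : G → G → Fˣ} (hf : IsTwoCocycle η f) : Phi n σ η f ∈ fixedUnits η := by
  have key : uMap η σ (Phi n σ η f) = Phi n σ η f := by
    have step : ∀ i : ℕ, uMap η σ (f (σ ^ i) σ) =
        f σ (σ ^ i) * f (σ ^ (i + 1)) σ * (f σ (σ ^ (i + 1)))⁻¹ := by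
      intro i
      have := cocycle_units hf σ (σ ^ i) σ
      rw [show σ * σ ^ i = σ ^ (i + 1) from (pow_succ' σ i).symm,
        show σ ^ i * σ = σ ^ (i + 1) from (pow_succ σ i).symm] at this
      rw [← this]; group
    have : uMap η σ (Phi n σ η f) =
        (∏ i ∈ range n, f σ (σ ^ i)) * (∏ i ∈ range n, f (σ ^ (i+1)) σ) *
          (∏ i ∈ range n, f σ (σ ^ (i+1)))⁻¹ := by
      rw [Phi, map_prod]
      simp only [step]
      rw [Finset.prod_mul_distrib, Finset.prod_mul_distrib, Finset.prod_inv_distrib]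
    rw [this, shift1 n σ hord (fun g => f g σ), shift1 n σ hord (fun g => f σ g),
      mul_comm (∏ i ∈ range n, f σ (σ ^ i)), mul_assoc, mul_inv_cancel, mul_one, Phi]
  -- now all g
  have all : ∀ i : ℕ, η (σ ^ i) ((Phi n σ η f : Fˣ) : F) = ((Phi n σ η f : Fˣ) : F) := by
    intro i
    induction i with
    | zero => rw [pow_zero, map_one]; rfl
    | succ i ih =>
      have : η (σ ^ (i+1)) ((Phi n σ η f : Fˣ) : F) = η (σ^i) (η σ ((Phi n σ η f : Fˣ) : F)) := by
        rw [pow_succ, map_mul]; rfl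
      rw [this, show η σ ((Phi n σ η f : Fˣ) : F) = ((Phi n σ η f : Fˣ) : F) from
        congrArg Units.val key, ih]
  intro g
  obtain ⟨i, _, rfl⟩ := exists_ind n σ hn hord hgen g
  exact all i

/-- Step C : coboundaries have invariant a norm. -/
lemma Phi_coboundary (hord : orderOf σ = n) {f : G → G → Fˣ}
    (hf : IsTwoCoboundary η f) : ∃ x : Fˣ, cyclicNormHom η σ n x = Phi n σ η f := by
  rw [coboundary_iff_units] at hf
  obtain ⟨r, hr⟩ := hf
  refine ⟨r σ, ?_⟩
  have : Phi n σ η f = (∏ i ∈ range n, r (σ ^ i)) * (∏ i ∈ range n, uMap η (σ ^ i) (r σ)) *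
      (∏ i ∈ range n, r (σ ^ (i+1)))⁻¹ := by
    rw [Phi]
    rw [← Finset.prod_inv_distrib, ← Finset.prod_mul_distrib, ← Finset.prod_mul_distrib]
    apply Finset.prod_congr rfl
    intro i _
    rw [hr (σ ^ i) σ, pow_succ]
  rw [this, shift1 n σ hord (fun g => r g)]
  rw [cyclicNormHom]; simp [uMap]
end CocycleAlg
section StepD

open Finset

variable {G F : Type*} [Group G] [Field F] {η : G →* RingAut F} {n : ℕ} {σ : G}

lemma cocycle_right_one {f : G → G → Fˣ} (hf : IsTwoCocycle η f) (g : G) :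
    f g 1 = uMap η g (f 1 1) := by
  have := cocycle_units hf g 1 1
  simp only [mul_one, one_mul] at this
  exact (mul_right_cancel this).symm

/-- Step D, normalized case. -/
lemma coboundary_of_norm_normalized (hn : 0 < n) (hord : orderOf σ = n)
    (hgen : ∀ g : G, g ∈ Subgroup.zpowers σ) {f : G → G → Fˣ} (hf : IsTwoCocycle η f)
    (hnorm : ∀ g : G, f g 1 = 1) {x : Fˣ} (hx : cyclicNormHom η σ n x = Phi n σ η f) :
    IsTwoCoboundary η f := by
  classical
  -- partial products
  set P : ℕ → Fˣ := fun i => ∏ j ∈ range i, f (σ ^ j) σ with hP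
  set Q : ℕ → Fˣ := fun i => ∏ j ∈ range i, uMap η (σ ^ j) x with hQ
  set rr : ℕ → Fˣ := fun i => Q i * (P i)⁻¹ with hrr
  have hPsucc : ∀ i, P (i+1) = P i * f (σ ^ i) σ := fun i => Finset.prod_range_succ _ i
  have hQsucc : ∀ i, Q (i+1) = Q i * uMap η (σ ^ i) x := fun i => Finset.prod_range_succ _ i
  have hrrsucc : ∀ i, rr (i+1) = rr i * uMap η (σ ^ i) x * (f (σ ^ i) σ)⁻¹ := by
    intro i; rw [hrr]; simp only [hPsucc, hQsucc, mul_inv_rev]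
    rw [Units.ext_iff]; push_cast; field_simp
  have uAdd : ∀ (i j : ℕ) (y : Fˣ), uMap η (σ ^ (i + j)) y = uMap η (σ ^ i) (uMap η (σ ^ j) y) := by
    intro i j y; rw [pow_add, uMap_mul_apply]
  -- main induction
  have main : ∀ (j i : ℕ), f (σ ^ i) (σ ^ j)
      = rr i * uMap η (σ ^ i) (rr j) * (rr (i + j))⁻¹ := by
    intro j
    induction j with
    | zero =>
      intro i
      have : rr 0 = 1 := by rw [hrr]; simp [hP, hQ]
      simp [pow_zero, hnorm, this]
    | succ j ih =>
      intro i
      have hcoc := cocycle_units hf (σ ^ i) (σ ^ j) σ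
      rw [show (σ:G) ^ j * σ = σ ^ (j+1) from (pow_succ σ j).symm,
        show (σ:G) ^ i * σ ^ j = σ ^ (i+j) from (pow_add σ i j).symm] at hcoc
      have step : f (σ ^ i) (σ ^ (j+1))
          = (uMap η (σ ^ i) (f (σ ^ j) σ))⁻¹ * (f (σ ^ i) (σ ^ j) * f (σ ^ (i+j)) σ) := by
        rw [← hcoc]; group
      rw [step, ih i, show i + (j + 1) = (i + j) + 1 from (add_assoc i j 1).symm]
      rw [hrrsucc j, hrrsucc (i+j)]
      simp only [map_mul, map_inv, mul_inv_rev, inv_inv, uAdd i j]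
      rw [Units.ext_iff]; push_cast; field_simp
  -- periodicity
  have hperiod : ∀ i, rr (i + n) = rr i := by
    intro i
    have hPn : P (i + n) = P i * Phi n σ η f := by
      rw [hP]; simp only []
      rw [Finset.prod_range_add]
      congr 1
      calc ∏ j ∈ range n, f (σ ^ (i + j)) σ = ∏ j ∈ range n, f (σ ^ j) σ :=
            shiftm n σ hord (fun g => f g σ) i
        _ = Phi n σ η f := rfl
    have hQn : Q (i + n) = Q i * cyclicNormHom η σ n x := by
      rw [hQ]; simp only []
      rw [Finset.prod_range_add]
      congr 1
      exact shiftm n σ hord (fun g => uMap η g x) i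
    rw [hrr]; simp only [hPn, hQn, hx, mul_inv_rev]
    group
  have hmod : ∀ i, rr (i % n) = rr i := by
    intro i
    conv_rhs => rw [← Nat.mod_add_div i n]
    generalize i / n = d
    induction d with
    | zero => simp
    | succ d ihd => rw [Nat.mul_succ, ← add_assoc, hperiod, ihd]
  -- conclude
  rw [coboundary_iff_units]
  refine ⟨fun g => rr (ind hn hord hgen g), fun g h => ?_⟩
  have h1 : ind hn hord hgen (g * h) = (ind hn hord hgen g + ind hn hord hgen h) % n :=
    ind_mul hn hord hgen g h
  dsimp only
  rw [h1, hmod]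
  conv_lhs => rw [← pow_ind hn hord hgen g, ← pow_ind hn hord hgen h]
  rw [main (ind hn hord hgen h) (ind hn hord hgen g), pow_ind hn hord hgen g]

end StepD
section KerChar

open Finset

variable {G F : Type*} [Group G] [Field F] {η : G →* RingAut F} {n : ℕ} {σ : G}

lemma coboundary_uMap_const (d : Fˣ) :
    IsTwoCoboundary η (fun g (_ : G) => uMap η g d) := by
  rw [coboundary_iff_units]
  refine ⟨fun _ => d, fun g h => ?_⟩
  rw [Units.ext_iff]; push_cast; field_simp

lemma coboundary_of_norm (hn : 0 < n) (hord : orderOf σ = n)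
    (hgen : ∀ g : G, g ∈ Subgroup.zpowers σ) {f : G → G → Fˣ} (hf : IsTwoCocycle η f)
    (hx : Phi n σ η f ∈ (cyclicNormHom η σ n).range) : IsTwoCoboundary η f := by
  obtain ⟨x, hx⟩ := hx
  set d : Fˣ := (f 1 1)⁻¹ with hd
  set e : G → G → Fˣ := fun g (_ : G) => uMap η g d with he
  have hecob : IsTwoCoboundary η e := coboundary_uMap_const d
  have hecoc : IsTwoCocycle η e := coboundary_isCocycle hecob
  have hfe : IsTwoCocycle η (f * e) := (twoCocycles η).mul_mem hf hecoc
  have hnorm : ∀ g : G, (f * e) g 1 = 1 := by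
    intro g
    show f g 1 * uMap η g d = 1
    rw [cocycle_right_one hf g, hd, map_inv, mul_inv_cancel]
  have hPhie : Phi n σ η e = cyclicNormHom η σ n d := by
    rw [Phi, cyclicNormHom]; rfl
  have hPhi : cyclicNormHom η σ n (x * d) = Phi n σ η (f * e) := by
    rw [Phi_mul, map_mul, hx, hPhie]
  have hcob : IsTwoCoboundary η (f * e) :=
    coboundary_of_norm_normalized hn hord hgen hfe hnorm hPhi
  have : f = (f * e) * e⁻¹ := by group
  rw [this]
  exact (twoCoboundaries η).mul_mem hcob ((twoCoboundaries η).inv_mem hecob)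

lemma ker_char (hn : 0 < n) (hord : orderOf σ = n)
    (hgen : ∀ g : G, g ∈ Subgroup.zpowers σ) {f : G → G → Fˣ} (hf : IsTwoCocycle η f) :
    IsTwoCoboundary η f ↔ Phi n σ η f ∈ (cyclicNormHom η σ n).range := by
  constructor
  · intro h
    obtain ⟨x, hx⟩ := Phi_coboundary σ hord h
    exact ⟨x, hx⟩
  · exact coboundary_of_norm hn hord hgen hf

end KerChar

section StdCocycle

open Finset

variable {G F : Type*} [Group G] [Field F] {η : G →* RingAut F} {n : ℕ} {σ : G}

lemma div_key (a b c N : ℕ) (hN : 0 < N) : (b + c)/N + (a + (b+c) % N)/N = (a+b+c)/N := by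
  have e : a + (b+c) % N + ((b+c)/N)*N = a + b + c := by
    have h := Nat.mod_add_div (b+c) N
    calc a + (b+c)%N + ((b+c)/N)*N = a + ((b+c)%N + N*((b+c)/N)) := by ring
      _ = a + (b+c) := by rw [h]
      _ = a+b+c := by ring
  rw [← e, Nat.add_mul_div_right _ _ hN]
  ring

/-- standard cocycle attached to a fixed unit -/
noncomputable def stdC (hn : 0 < n) (hord : orderOf σ = n)
    (hgen : ∀ g : G, g ∈ Subgroup.zpowers σ) (b : Fˣ) : G → G → Fˣ :=
  fun g h => b ^ ((ind hn hord hgen g + ind hn hord hgen h) / n)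

lemma stdC_isCocycle (hn : 0 < n) (hord : orderOf σ = n)
    (hgen : ∀ g : G, g ∈ Subgroup.zpowers σ) {b : Fˣ} (hb : b ∈ fixedUnits η) :
    IsTwoCocycle η (stdC hn hord hgen b) := by
  intro g h k
  set i := ind hn hord hgen g
  set j := ind hn hord hgen h
  set l := ind hn hord hgen k
  have hbfix : ∀ (g' : G) (m : ℕ), η g' (((b ^ m : Fˣ) : F)) = ((b ^ m : Fˣ) : F) := by
    intro g' m
    push_cast
    rw [map_pow, hb g']
  simp only [stdC, ind_mul hn hord hgen]
  rw [hbfix]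
  push_cast
  rw [← pow_add, ← pow_add]
  congr 1
  rw [div_key i j l n hn]
  have h2 : (i+j)/n + ((i+j) % n + l)/n = (i+j+l)/n := by
    have e : ((i+j) % n + l) + ((i+j)/n)*n = i + j + l := by
      have h := Nat.mod_add_div (i+j) n
      calc ((i+j)%n + l) + ((i+j)/n)*n = ((i+j)%n + n*((i+j)/n)) + l := by ring
        _ = (i+j) + l := by rw [h]
        _ = i+j+l := by ring
    rw [← e, Nat.add_mul_div_right _ _ hn]
    ring
  rw [← h2]

lemma stdC_phi (hn : 1 < n) (hord : orderOf σ = n)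
    (hgen : ∀ g : G, g ∈ Subgroup.zpowers σ) (b : Fˣ) :
    Phi n σ η (stdC (by omega) hord hgen b) = b := by
  have h0 : 0 < n := by omega
  obtain ⟨m, rfl⟩ : ∃ m, n = m + 1 := ⟨n - 1, by omega⟩
  rw [Phi]
  have hcong : ∀ i ∈ range (m+1), stdC h0 hord hgen b (σ ^ i) σ = b ^ ((i + 1)/(m+1)) := by
    intro i hi
    simp only [stdC]
    rw [ind_pow h0 hord hgen (mem_range.mp hi), ind_sigma hn hord hgen]
  rw [Finset.prod_congr rfl hcong, Finset.prod_range_succ]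
  have : ∀ i ∈ range m, b ^ ((i+1)/(m+1)) = 1 := by
    intro i hi
    rw [Nat.div_eq_of_lt (by have := mem_range.mp hi; omega), pow_zero]
  rw [Finset.prod_congr rfl this, Finset.prod_const_one, one_mul, Nat.div_self (by omega), pow_one]

end StdCocycle
section Counting

open Finset

lemma geom_nat (c : ℕ) (hc : 1 ≤ c) : ∀ m : ℕ, (c - 1) * ∑ i ∈ range m, c^i = c^m - 1 := by
  intro m
  induction m with
  | zero => simp
  | succ m ih =>
    rw [Finset.sum_range_succ, Nat.mul_add, ih]
    have h1 : (c - 1) * c^m = c * c^m - 1 * c^m := Nat.sub_mul c 1 (c^m)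
    have h2 : c^(m+1) = c * c^m := by rw [pow_succ]; ring
    have h3 : 1 ≤ c^m := Nat.one_le_pow _ _ (by omega)
    have h4 : c^m ≤ c * c^m := Nat.le_mul_of_pos_left _ (by omega)
    omega

variable {G F : Type*} [Group G] [Field F] [Fintype F]

lemma eta_pow {σ : G} {η : G →* RingAut F} {p : ℕ} (hη : ∀ x : F, η σ x = x ^ p) :
    ∀ (i : ℕ) (x : F), η (σ ^ i) x = x ^ (p ^ i) := by
  intro i
  induction i with
  | zero => intro x; rw [pow_zero, pow_zero, pow_one, map_one]; rfl
  | succ i ih =>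
    intro x
    rw [pow_succ, map_mul]
    have h0 : (η (σ ^ i) * η σ) x = η (σ ^ i) (η σ x) := rfl
    rw [h0, hη x, ih, ← pow_mul, pow_succ, mul_comm (p^i) p]

lemma cyclicNorm_pow {σ : G} {η : G →* RingAut F} {p : ℕ} (hη : ∀ x : F, η σ x = x ^ p)
    (n : ℕ) (x : Fˣ) : cyclicNormHom η σ n x = x ^ (∑ i ∈ range n, p ^ i) := by
  apply Units.ext
  have h1 : ((cyclicNormHom η σ n x : Fˣ) : F) = ∏ i ∈ range n, η (σ ^ i) ((x : Fˣ) : F) := by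
    rw [cyclicNormHom]
    simp only [MonoidHom.coe_mk, OneHom.coe_mk]
    push_cast
    rfl
  rw [h1]
  have h2 : ∀ i ∈ range n, η (σ ^ i) ((x : Fˣ) : F) = ((x : Fˣ) : F) ^ p ^ i :=
    fun i _ => eta_pow hη i _
  rw [Finset.prod_congr rfl h2, Finset.prod_pow_eq_pow_sum]
  push_cast
  ring

lemma fixed_iff {n : ℕ} {σ : G} {η : G →* RingAut F} {p : ℕ} (hp : 2 ≤ p)
    (hη : ∀ x : F, η σ x = x ^ p) (hn : 0 < n) (hord : orderOf σ = n)
    (hgen : ∀ g : G, g ∈ Subgroup.zpowers σ) (x : Fˣ) :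
    x ∈ fixedUnits η ↔ x ^ (p - 1) = 1 := by
  constructor
  · intro hx
    have h1 : η σ ((x : Fˣ) : F) = ((x : Fˣ) : F) := hx σ
    rw [hη] at h1
    have h2 : x ^ p = x := Units.ext (by push_cast; exact h1)
    have h3 : x ^ (p-1) * x = 1 * x := by
      rw [← pow_succ, one_mul, show p - 1 + 1 = p by omega, h2]
    exact mul_right_cancel h3
  · intro hx g
    obtain ⟨i, _, rfl⟩ := exists_ind n σ hn hord hgen g
    rw [eta_pow hη i]
    have hdvd : (p - 1) ∣ (p ^ i - 1) := by
      have := Nat.sub_dvd_pow_sub_pow p 1 i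
      simpa using this
    have hx2 : x ^ (p ^ i - 1) = 1 := by
      obtain ⟨c, hc⟩ := hdvd
      rw [hc, pow_mul, hx, one_pow]
    have : x ^ (p ^ i) = x := by
      have h3 : 1 ≤ p ^ i := Nat.one_le_pow _ _ (by omega)
      calc x ^ (p^i) = x ^ ((p^i - 1) + 1) := by congr 1; omega
        _ = x ^ (p^i - 1) * x := by rw [pow_succ]
        _ = x := by rw [hx2, one_mul]
    calc ((x : Fˣ) : F) ^ (p ^ i) = ((x ^ (p ^ i) : Fˣ) : F) := by push_cast; ring
      _ = ((x : Fˣ) : F) := congrArg Units.val this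

end Counting
section CardImage

open Finset Subgroup

variable {G F : Type*} [Group G] [Field F] [Fintype F]

lemma subgroup_pow_card {H : Type*} [Group H] {S : Subgroup H} {y : H} (hy : y ∈ S) :
    y ^ Nat.card S = 1 := by
  have h := pow_card_eq_one' (G := S) (x := ⟨y, hy⟩)
  have h2 : (((⟨y, hy⟩ : S) ^ Nat.card S : S) : H) = y ^ Nat.card S := by push_cast; rfl
  rw [← h2, h]; rfl

lemma card_image_eq (σ : G) (η : G →* RingAut F) (p s t n : ℕ)
    (hp : 2 ≤ p) (hs : 0 < s) (ht : 0 < t) (hnst : n = s * t)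
    (hη : ∀ x : F, η σ x = x ^ p)
    (hn : 0 < n) (hord : orderOf σ = n) (hgen : ∀ g : G, g ∈ Subgroup.zpowers σ)
    (hQ : Fintype.card F = p ^ s) :
    Nat.card ((fixedUnits η).map (QuotientGroup.mk' (cyclicNormHom η σ n).range)) =
      Nat.gcd (p - 1) t := by
  classical
  set Q : ℕ := p ^ s - 1 with hQdef
  have hps1 : 1 ≤ p ^ s := Nat.one_le_pow _ _ (by omega)
  have hppow : 2 ≤ p ^ s := by
    calc 2 ≤ p := hp
    _ = p ^ 1 := (pow_one p).symm
    _ ≤ p ^ s := Nat.pow_le_pow_right (by omega) hs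
  have hQpos : 0 < Q := by omega
  have hcardU : Nat.card Fˣ = Q := by
    rw [Nat.card_eq_fintype_card, Fintype.card_units, hQ]
  obtain ⟨g₀, hg₀⟩ := IsCyclic.exists_generator (α := Fˣ)
  have hordg : orderOf g₀ = Q := by
    rw [orderOf_eq_card_of_forall_mem_zpowers hg₀, hcardU]
  -- numeric quantities
  set E : ℕ := ∑ i ∈ range n, p ^ i with hEdef
  set A : ℕ := ∑ i ∈ range s, p ^ i with hAdef
  set B : ℕ := ∑ j ∈ range t, (p ^ s) ^ j with hBdef
  have hgeomE : (p - 1) * E = p ^ n - 1 := geom_nat p (by omega) n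
  have hgeomA : (p - 1) * A = p ^ s - 1 := geom_nat p (by omega) s
  have hgeomB : (p ^ s - 1) * B = p ^ n - 1 := by
    have := geom_nat (p ^ s) hps1 t
    rwa [← pow_mul, ← hnst] at this
  have hApos : 0 < A := by
    rcases Nat.eq_zero_or_pos A with h | h
    · rw [h, mul_zero] at hgeomA; omega
    · exact h
  have hQA : Q = A * (p - 1) := by rw [hQdef, ← hgeomA]; ring
  have hE : E = A * B := by
    apply Nat.eq_of_mul_eq_mul_left (show 0 < p - 1 by omega)
    rw [hgeomE, ← hgeomB, ← hgeomA]; ring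
  -- B ≡ t mod (p-1)
  have hBt : ∃ C, B = t + C * (p - 1) := by
    have hterm : ∀ j ∈ range t, (p ^ s) ^ j = 1 + ((p ^ s) ^ j - 1) := by
      intro j _
      have : 1 ≤ (p ^ s) ^ j := Nat.one_le_pow _ _ (by omega)
      omega
    have hsum : B = t + ∑ j ∈ range t, ((p ^ s) ^ j - 1) := by
      rw [hBdef, Finset.sum_congr rfl hterm, Finset.sum_add_distrib]
      simp
    have hdvd : (p - 1) ∣ ∑ j ∈ range t, ((p ^ s) ^ j - 1) := by
      apply Finset.dvd_sum
      intro j _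
      have := Nat.sub_dvd_pow_sub_pow p 1 (s * j)
      simpa [pow_mul] using this
    obtain ⟨C, hC⟩ := hdvd
    exact ⟨C, by rw [hsum, hC]; ring⟩
  have hgcdB : Nat.gcd (p - 1) B = Nat.gcd (p - 1) t := by
    obtain ⟨C, hC⟩ := hBt
    rw [hC, Nat.gcd_add_mul_right_right]
  have hgcdQE : Nat.gcd Q E = A * Nat.gcd (p - 1) t := by
    rw [hQA, hE, Nat.gcd_mul_left, hgcdB]
  -- subgroup identifications
  set NM := (cyclicNormHom η σ n).range with hNMdef
  have hmemp : ∀ y : Fˣ, ∃ m : ℕ, g₀ ^ m = y := by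
    intro y
    have := hg₀ y
    rw [← mem_powers_iff_mem_zpowers] at this
    obtain ⟨m, hm⟩ := this
    exact ⟨m, hm⟩
  have hNM : NM = Subgroup.zpowers (g₀ ^ E) := by
    ext x
    constructor
    · rintro ⟨y, rfl⟩
      obtain ⟨m, rfl⟩ := hmemp y
      rw [cyclicNorm_pow hη, ← hEdef, ← pow_mul, mul_comm, pow_mul,
        ← mem_powers_iff_mem_zpowers, Submonoid.mem_powers_iff]
      exact ⟨m, rfl⟩
    · intro hx
      rw [← mem_powers_iff_mem_zpowers, Submonoid.mem_powers_iff] at hx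
      obtain ⟨m, rfl⟩ := hx
      refine ⟨g₀ ^ m, ?_⟩
      rw [cyclicNorm_pow hη, ← hEdef, ← pow_mul, mul_comm, pow_mul]
  have hEpos : 0 < E := by
    rcases Nat.eq_zero_or_pos E with h | h
    · rw [h, mul_zero] at hgeomE
      have : 2 ≤ p ^ n := by
        calc 2 ≤ p := hp
        _ = p ^ 1 := (pow_one p).symm
        _ ≤ p ^ n := Nat.pow_le_pow_right (by omega) hn
      omega
    · exact h
  have hcardNM : Nat.card NM = Q / Nat.gcd Q E := by
    rw [hNM, Nat.card_zpowers, orderOf_pow, hordg]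
  -- fixed units
  set dd := Q / (p - 1) with hdddef
  have hp1Q : (p - 1) ∣ Q := ⟨A, by rw [hQA]; ring⟩
  have hddQ : dd * (p - 1) = Q := Nat.div_mul_cancel hp1Q
  have hddpos : 0 < dd := by
    rcases Nat.eq_zero_or_pos dd with h | h
    · rw [h, zero_mul] at hddQ; omega
    · exact h
  have hMf : fixedUnits η = Subgroup.zpowers (g₀ ^ dd) := by
    ext x
    rw [fixed_iff hp hη hn hord hgen]
    constructor
    · intro hx
      obtain ⟨m, rfl⟩ := hmemp x
      have h1 : g₀ ^ (m * (p - 1)) = 1 := by rw [pow_mul, hx]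
      have h2 : Q ∣ m * (p - 1) := hordg ▸ orderOf_dvd_of_pow_eq_one h1
      rw [← hddQ] at h2
      have h3 : dd ∣ m := (Nat.mul_dvd_mul_iff_right (show 0 < p - 1 by omega)).mp h2
      obtain ⟨c, rfl⟩ := h3
      rw [pow_mul, ← mem_powers_iff_mem_zpowers, Submonoid.mem_powers_iff]
      exact ⟨c, rfl⟩
    · intro hx
      rw [← mem_powers_iff_mem_zpowers, Submonoid.mem_powers_iff] at hx
      obtain ⟨m, rfl⟩ := hx
      rw [← pow_mul, ← pow_mul]
      have : dd * (m * (p - 1)) = Q * m := by rw [← hddQ]; ring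
      rw [this, pow_mul, ← hordg, pow_orderOf_eq_one, one_pow]
  have hcardMf : Nat.card (fixedUnits η) = p - 1 := by
    rw [hMf, Nat.card_zpowers, orderOf_pow, hordg]
    have hgcd : Nat.gcd Q dd = dd := Nat.gcd_eq_right ⟨p - 1, by rw [← hddQ]⟩
    rw [hgcd, ← hddQ, Nat.mul_div_cancel_left _ hddpos]
  -- NM ≤ fixedUnits
  have hle : NM ≤ fixedUnits η := by
    intro x hx
    obtain ⟨y, rfl⟩ := hx
    rw [fixed_iff hp hη hn hord hgen, cyclicNorm_pow hη, ← hEdef, ← pow_mul]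
    have hdvd : Q ∣ E * (p - 1) := by
      have h1 : E * (p - 1) = p ^ n - 1 := by rw [← hgeomE]; ring
      have h2 : Q ∣ p ^ n - 1 := by
        have := Nat.sub_dvd_pow_sub_pow (p ^ s) 1 t
        rwa [← pow_mul, ← hnst, one_pow, ← hQdef] at this
      rw [h1]; exact h2
    obtain ⟨c, hc⟩ := hdvd
    rw [hc, pow_mul, ← hcardU, pow_card_eq_one', one_pow]
  -- the quotient chain
  set ρ : fixedUnits η →* Fˣ ⧸ NM :=
    (QuotientGroup.mk' NM).comp (fixedUnits η).subtype with hρdef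
  have hker : ρ.ker = NM.subgroupOf (fixedUnits η) := by
    ext x
    simp only [hρdef, MonoidHom.mem_ker, MonoidHom.comp_apply, Subgroup.coe_subtype,
      QuotientGroup.mk'_apply, QuotientGroup.eq_one_iff, Subgroup.mem_subgroupOf]
  have hrange : ρ.range = (fixedUnits η).map (QuotientGroup.mk' NM) := by
    rw [hρdef, MonoidHom.range_comp, Subgroup.range_subtype]
  have hcard1 : Nat.card (fixedUnits η) = Nat.card ρ.range * Nat.card NM := by
    have h1 := Subgroup.card_eq_card_quotient_mul_card_subgroup ρ.ker
    have h2 : Nat.card (fixedUnits η ⧸ ρ.ker) = Nat.card ρ.range :=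
      Nat.card_congr (QuotientGroup.quotientKerEquivRange ρ).toEquiv
    have h3 : Nat.card ρ.ker = Nat.card NM := by
      rw [hker]
      exact Nat.card_congr (Subgroup.subgroupOfEquivOfLe hle).toEquiv
    rw [h1, h2, h3]
  -- final arithmetic
  set gg := Nat.gcd (p - 1) t with hggdef
  have hgcdpos : 0 < Nat.gcd Q E := Nat.gcd_pos_of_pos_left E hQpos
  have hcNM : Nat.card NM * (A * gg) = Q := by
    rw [hcardNM, ← hgcdQE]
    exact Nat.div_mul_cancel (Nat.gcd_dvd_left Q E)
  have hcNMgg : Nat.card NM * gg = p - 1 := by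
    have h4 : A * (Nat.card NM * gg) = A * (p - 1) := by
      calc A * (Nat.card NM * gg) = Nat.card NM * (A * gg) := by ring
        _ = Q := hcNM
        _ = A * (p - 1) := hQA
    exact Nat.eq_of_mul_eq_mul_left hApos h4
  have hNMpos : 0 < Nat.card NM := by
    rcases Nat.eq_zero_or_pos (Nat.card NM) with h | h
    · rw [h, zero_mul] at hcNMgg; omega
    · exact h
  have hfin : Nat.card ((fixedUnits η).map (QuotientGroup.mk' NM)) * Nat.card NM
      = gg * Nat.card NM := by
    rw [← hrange, ← hcard1]
    calc Nat.card (fixedUnits η) = p - 1 := hcardMf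
      _ = Nat.card NM * gg := hcNMgg.symm
      _ = gg * Nat.card NM := by ring
  exact Nat.eq_of_mul_eq_mul_right hNMpos hfin

end CardImage
section H2Card

open Finset Subgroup

variable {G F : Type*} [Group G] [Field F] {η : G →* RingAut F} {n : ℕ} {σ : G}

/-- The invariant, as a monoid hom on cocycles. -/
def PhiHom (n : ℕ) (σ : G) (η : G →* RingAut F) : twoCocycles η →* Fˣ where
  toFun f := Phi n σ η f.1
  map_one' := by simp [Phi]
  map_mul' a b := by
    show Phi n σ η (a.1 * b.1) = _
    rw [Phi_mul]

lemma card_H2 (hn2 : 2 ≤ n) (hord : orderOf σ = n)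
    (hgen : ∀ g : G, g ∈ Subgroup.zpowers σ) :
    Nat.card (H2 η) =
      Nat.card ((fixedUnits η).map (QuotientGroup.mk' (cyclicNormHom η σ n).range)) := by
  have hn : 0 < n := by omega
  set NM := (cyclicNormHom η σ n).range with hNMdef
  set χ : twoCocycles η →* Fˣ ⧸ NM := (QuotientGroup.mk' NM).comp (PhiHom n σ η) with hχdef
  have hker : χ.ker = (twoCoboundaries η).subgroupOf (twoCocycles η) := by
    ext f
    have h1 : f ∈ χ.ker ↔ Phi n σ η f.1 ∈ NM := by
      simp only [hχdef, MonoidHom.mem_ker, MonoidHom.comp_apply, QuotientGroup.mk'_apply,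
        QuotientGroup.eq_one_iff]
      rfl
    rw [h1, Subgroup.mem_subgroupOf]
    have h2 : (f : G → G → Fˣ) ∈ twoCoboundaries η ↔ IsTwoCoboundary η f.1 := Iff.rfl
    rw [h2, ker_char hn hord hgen f.2, hNMdef]
  have hrange : χ.range = (fixedUnits η).map (QuotientGroup.mk' NM) := by
    apply le_antisymm
    · rintro x ⟨f, rfl⟩
      exact ⟨Phi n σ η f.1, Phi_mem_fixed σ hn hord hgen f.2, rfl⟩
    · rintro x ⟨b, hb, rfl⟩
      refine ⟨⟨stdC hn hord hgen b, stdC_isCocycle hn hord hgen hb⟩, ?_⟩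
      show QuotientGroup.mk' NM (Phi n σ η (stdC hn hord hgen b)) = QuotientGroup.mk' NM b
      congr 1
      exact stdC_phi hn2 hord hgen b
  calc Nat.card (H2 η) = Nat.card (twoCocycles η ⧸ χ.ker) := by rw [hker]
    _ = Nat.card χ.range := Nat.card_congr (QuotientGroup.quotientKerEquivRange χ).toEquiv
    _ = _ := by rw [hrange]

lemma pullback_cocycle {f : G → G → Fˣ} (ψ : MulAut G) (hψ : ∀ g : G, η (ψ g) = η g)
    (hf : IsTwoCocycle η f) : IsTwoCocycle η (fun g h => f (ψ g) (ψ h)) := by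
  intro g h k
  dsimp only
  rw [map_mul ψ h k, map_mul ψ g h]
  have := hf (ψ g) (ψ h) (ψ k)
  rwa [hψ g] at this

lemma pullback_coboundary {f : G → G → Fˣ} (ψ : MulAut G) (hψ : ∀ g : G, η (ψ g) = η g)
    (hf : IsTwoCoboundary η f) : IsTwoCoboundary η (fun g h => f (ψ g) (ψ h)) := by
  obtain ⟨r, hr⟩ := hf
  refine ⟨fun g => r (ψ g), fun g h => ?_⟩
  have := hr (ψ g) (ψ h)
  rwa [hψ g, ← map_mul ψ] at this

lemma sum_shift_div {u : ℕ} (hn : 0 < n) (hu : u ≤ n) :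
    ∑ i ∈ range n, (i + u) / n = u := by
  have h1 : ∑ i ∈ range n, (i + u) / n = ∑ i ∈ Ico u (u + n), i / n := by
    rw [Finset.sum_Ico_eq_sum_range]
    simp only [Nat.add_sub_cancel_left]
    apply Finset.sum_congr rfl
    intro i _
    rw [Nat.add_comm u i]
  rw [h1, ← Finset.sum_Ico_consecutive (fun i => i / n) hu (by omega)]
  have h2 : ∑ i ∈ Ico u n, i / n = 0 := by
    apply Finset.sum_eq_zero
    intro i hi
    exact Nat.div_eq_of_lt (mem_Ico.mp hi).2
  have h3 : ∑ i ∈ Ico n (u + n), i / n = u := by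
    have : ∀ i ∈ Ico n (u + n), i / n = 1 := by
      intro i hi
      obtain ⟨hi1, hi2⟩ := mem_Ico.mp hi
      apply Nat.div_eq_of_lt_le (by omega) (by omega)
    rw [Finset.sum_congr rfl this, Finset.sum_const, Nat.card_Ico, smul_eq_mul]
    omega
  rw [h2, h3]
  omega

lemma sum_mul_mod {u : ℕ} (hn : 1 < n) (hcop : Nat.Coprime u n) (H : ℕ → ℕ) :
    ∑ i ∈ range n, H (u * i % n) = ∑ x ∈ range n, H x := by
  obtain ⟨v, -, hv⟩ := Nat.exists_mul_mod_eq_one_of_coprime hcop hn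
  have hn0 : 0 < n := by omega
  have huv : (u * v) ≡ 1 [MOD n] := by
    show u * v % n = 1 % n
    rw [hv, Nat.mod_eq_of_lt hn]
  have left_inv : ∀ i, i < n → v * (u * i % n) % n = i := by
    intro i hi
    have h1 : v * (u * i % n) ≡ i [MOD n] := by
      calc v * (u * i % n) ≡ v * (u * i) [MOD n] := Nat.ModEq.mul_left v (Nat.mod_modEq _ _)
        _ = (u * v) * i := by ring
        _ ≡ 1 * i [MOD n] := Nat.ModEq.mul_right i huv
        _ = i := by ring
    calc v * (u * i % n) % n = i % n := h1
      _ = i := Nat.mod_eq_of_lt hi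
  have right_inv : ∀ x, x < n → u * (v * x % n) % n = x := by
    intro x hx
    have h1 : u * (v * x % n) ≡ x [MOD n] := by
      calc u * (v * x % n) ≡ u * (v * x) [MOD n] := Nat.ModEq.mul_left u (Nat.mod_modEq _ _)
        _ = (u * v) * x := by ring
        _ ≡ 1 * x [MOD n] := Nat.ModEq.mul_right x huv
        _ = x := by ring
    calc u * (v * x % n) % n = x % n := h1
      _ = x := Nat.mod_eq_of_lt hx
  apply Finset.sum_nbij' (fun i => u * i % n) (fun x => v * x % n)
  · intro i _; exact mem_range.mpr (Nat.mod_lt _ hn0)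
  · intro x _; exact mem_range.mpr (Nat.mod_lt _ hn0)
  · intro i hi; exact left_inv i (mem_range.mp hi)
  · intro x hx; exact right_inv x (mem_range.mp hx)
  · intro i _; rfl

end H2Card
section Trivial

open Finset Subgroup

variable {G F : Type*} [Group G] [Field F] {η : G →* RingAut F} {n : ℕ} {σ : G}

lemma Phi_stdC_pullback (hn2 : 2 ≤ n) (hord : orderOf σ = n)
    (hgen : ∀ g : G, g ∈ Subgroup.zpowers σ) {b : Fˣ} (ψ : MulAut G)
    (hcop : Nat.Coprime (ind (show 0 < n by omega) hord hgen (ψ σ)) n) :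
    Phi n σ η (fun g h => stdC (show 0 < n by omega) hord hgen b (ψ g) (ψ h)) =
      b ^ (ind (show 0 < n by omega) hord hgen (ψ σ)) := by
  have hn : 0 < n := by omega
  set u := ind hn hord hgen (ψ σ) with hudef
  have hu : u < n := ind_lt hn hord hgen _
  have hψσ : ψ σ = σ ^ u := (pow_ind hn hord hgen _).symm
  have hterm : ∀ i ∈ range n, (fun g h => stdC hn hord hgen b (ψ g) (ψ h)) (σ ^ i) σ
      = b ^ ((u * i % n + u) / n) := by
    intro i _
    have h1 : ψ (σ ^ i) = σ ^ (u * i) := by rw [map_pow, hψσ, ← pow_mul]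
    show stdC hn hord hgen b (ψ (σ ^ i)) (ψ σ) = _
    rw [h1, hψσ, stdC, ind_pow_mod hn hord hgen, ind_pow hn hord hgen hu]
  rw [Phi, Finset.prod_congr rfl hterm, Finset.prod_pow_eq_pow_sum]
  congr 1
  rw [sum_mul_mod (by omega) hcop (fun x => (x + u) / n)]
  exact sum_shift_div (by omega) (by omega)

lemma trivial_action (hn2 : 2 ≤ n) (hord : orderOf σ = n)
    (hgen : ∀ g : G, g ∈ Subgroup.zpowers σ)
    (hpow : ∀ b ∈ fixedUnits η, ∀ ψ : MulAut G, (∀ g : G, η (ψ g) = η g) →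
      b ^ (ind (show 0 < n by omega) hord hgen (ψ σ) - 1) ∈ (cyclicNormHom η σ n).range) :
    ∀ ψ : MulAut G, (∀ g : G, η (ψ g) = η g) →
      ∀ f : G → G → Fˣ, IsTwoCocycle η f →
        Cohomologous η (fun g g' => f (ψ g) (ψ g')) f := by
  have hn : 0 < n := by omega
  intro ψ hψ f hf
  set u := ind hn hord hgen (ψ σ) with hudef
  have hune : u ≠ 0 := by
    intro h0
    have h1 : ψ σ = 1 := by
      rw [← pow_ind hn hord hgen (ψ σ), ← hudef, h0, pow_zero]
    have h2 : σ = 1 := by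
      have := congrArg ψ.symm h1
      simpa using this
    rw [h2, orderOf_one] at hord
    omega
  have horda : orderOf (ψ σ) = n := by
    have := orderOf_injective ψ.toMonoidHom ψ.injective σ
    simp only [MulEquiv.coe_toMonoidHom] at this
    rw [this, hord]
  have hcop : Nat.Coprime u n := by
    have h1 : orderOf (σ ^ u) = n := by rw [pow_ind hn hord hgen (ψ σ)]; exact horda
    rw [orderOf_pow' σ hune, hord] at h1
    have h2 : Nat.gcd n u ∣ n := Nat.gcd_dvd_left n u
    have h3 : Nat.gcd n u * (n / Nat.gcd n u) = n := Nat.mul_div_cancel' h2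
    rw [h1] at h3
    have h4 : Nat.gcd n u = 1 := by
      have := Nat.eq_of_mul_eq_mul_right hn (h3.trans (one_mul n).symm)
      exact this
    exact Nat.coprime_comm.mp h4
  set a := Phi n σ η f with hadef
  have ha : a ∈ fixedUnits η := Phi_mem_fixed σ hn hord hgen hf
  set cdA := stdC hn hord hgen a with hcdAdef
  have hcdAcoc : IsTwoCocycle η cdA := stdC_isCocycle hn hord hgen ha
  have h1 : IsTwoCoboundary η (f * cdA⁻¹) := by
    apply coboundary_of_norm hn hord hgen ((twoCocycles η).mul_mem hf ((twoCocycles η).inv_mem hcdAcoc))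
    rw [Phi_mul, Phi_inv]
    have : Phi n σ η cdA = a := stdC_phi hn2 hord hgen a
    rw [this, ← hadef, mul_inv_cancel]
    exact ⟨1, map_one _⟩
  have h2 : IsTwoCoboundary η (fun g h => (f * cdA⁻¹) (ψ g) (ψ h)) :=
    pullback_coboundary ψ hψ h1
  have h3 : IsTwoCocycle η (fun g h => cdA (ψ g) (ψ h)) := pullback_cocycle ψ hψ hcdAcoc
  have h4 : IsTwoCocycle η ((fun g h => cdA (ψ g) (ψ h)) * f⁻¹) :=
    (twoCocycles η).mul_mem h3 ((twoCocycles η).inv_mem hf)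
  have h5 : Phi n σ η ((fun g h => cdA (ψ g) (ψ h)) * f⁻¹) = a ^ (u - 1) := by
    rw [Phi_mul, Phi_inv, Phi_stdC_pullback hn2 hord hgen ψ hcop, ← hadef, ← hudef]
    have : a ^ u = a ^ (u - 1) * a := by
      rw [← pow_succ]; congr 1; omega
    rw [this]
    group
  have h6 : a ^ (u - 1) ∈ (cyclicNormHom η σ n).range := hpow a ha ψ hψ
  have h7 : IsTwoCoboundary η ((fun g h => cdA (ψ g) (ψ h)) * f⁻¹) :=
    coboundary_of_norm hn hord hgen h4 (h5 ▸ h6)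
  have h8 := (twoCoboundaries η).mul_mem h2 h7
  have heq : (fun g h => (f * cdA⁻¹) (ψ g) (ψ h)) * ((fun g h => cdA (ψ g) (ψ h)) * f⁻¹)
      = fun g g' => f (ψ g) (ψ g') * (f g g')⁻¹ := by
    funext g h
    show (f (ψ g) (ψ h) * (cdA (ψ g) (ψ h))⁻¹) * (cdA (ψ g) (ψ h) * (f g h)⁻¹) = _
    group
  rw [heq] at h8
  exact h8

end Trivial
section Final

open Finset Subgroup

lemma pows_dvd {p s m : ℕ} (hp : 2 ≤ p) (hs : 0 < s) (h : (p ^ s - 1) ∣ (p ^ m - 1)) :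
    s ∣ m := by
  set e := m % s with hedef
  set d := m / s with hddef
  have hmd : s * d + e = m := Nat.div_add_mod m s
  have he : e < s := Nat.mod_lt m hs
  have hXpos : 1 ≤ p ^ e := Nat.one_le_pow _ _ (by omega)
  have hYpos : 1 ≤ p ^ (s * d) := Nat.one_le_pow _ _ (by omega)
  have hpm : p ^ m = p ^ (s * d) * p ^ e := by rw [← pow_add, hmd]
  have key : p ^ m - 1 = p ^ e * (p ^ (s * d) - 1) + (p ^ e - 1) := by
    have h1 : p ^ e * (p ^ (s * d) - 1) = p ^ e * p ^ (s * d) - p ^ e := by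
      rw [Nat.mul_sub, mul_one]
    have h2 : p ^ e * p ^ (s * d) = p ^ m := by rw [hpm]; ring
    have h4 : p ^ e ≤ p ^ m := Nat.pow_le_pow_right (by omega) (by omega)
    rw [h1, h2]
    omega
  have hdvd1 : (p ^ s - 1) ∣ p ^ (s * d) - 1 := by
    have := Nat.sub_dvd_pow_sub_pow (p ^ s) 1 d
    rwa [← pow_mul, one_pow] at this
  have hdvd2 : (p ^ s - 1) ∣ p ^ e * (p ^ (s * d) - 1) := Dvd.dvd.mul_left hdvd1 _
  have hdvd3 : (p ^ s - 1) ∣ p ^ e - 1 := by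
    have h3 : p ^ e - 1 = (p ^ m - 1) - p ^ e * (p ^ (s * d) - 1) := by omega
    rw [h3]
    exact Nat.dvd_sub h hdvd2
  have hlt : p ^ e - 1 < p ^ s - 1 := by
    have : p ^ e < p ^ s := Nat.pow_lt_pow_right (by omega) he
    omega
  have hzero : p ^ e - 1 = 0 := Nat.eq_zero_of_dvd_of_lt hdvd3 hlt
  have he0 : e = 0 := by
    by_contra hne
    have : p ^ 1 ≤ p ^ e := Nat.pow_le_pow_right (by omega) (by omega)
    rw [pow_one] at this
    omega
  exact Nat.dvd_of_mod_eq_zero he0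

end Final

/-- let the cyclic group `C_n = ⟨σ⟩` act on `F = F_{q^r}` via
`η(σ) = φ^k` and set `m = gcd(q^k - 1, nk/r)`. If `m ∣ r/k`, then every
`η`-compatible automorphism of `C_n` acts trivially on `H²_η(C_n, F^*)` (every
pullback of a 2-cocycle is cohomologous to the original), hence the number of orbits
of the pullback `Aut_η(C_n)`-action on `H²_η(C_n, F^*)` equals `m`. -/
theorem compat_acts_trivially_of_dvd {G F : Type*} [Group G] [Field F] [Fintype F]
    (q r k n : ℕ) (hq : q.Prime) (hr : 0 < r) (hk : 0 < k) (hn : 0 < n)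
    (hkr : k ∣ r) (hrkn : r / k ∣ n)
    (hF : Fintype.card F = q ^ r)
    (σ : G) (hgen : ∀ g : G, g ∈ Subgroup.zpowers σ) (hord : orderOf σ = n)
    (η : G →* RingAut F) (hη : ∀ x : F, η σ x = x ^ q ^ k)
    (hm : Nat.gcd (q ^ k - 1) (n * k / r) ∣ r / k) :
    (∀ ψ : MulAut G, (∀ g : G, η (ψ g) = η g) →
      ∀ f : G → G → Fˣ, IsTwoCocycle η f →
        Cohomologous η (fun g g' => f (ψ g) (ψ g')) f) ∧
    Nat.card (Quot (pullbackRel η)) = Nat.gcd (q ^ k - 1) (n * k / r) := by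
  classical
  set p := q ^ k with hpdef
  set s := r / k with hsdef
  have hq2 : 2 ≤ q := hq.two_le
  have hp2 : 2 ≤ p := by
    calc 2 ≤ q := hq2
    _ = q ^ 1 := (pow_one q).symm
    _ ≤ q ^ k := Nat.pow_le_pow_right (by omega) hk
  have hks : k * s = r := Nat.mul_div_cancel' hkr
  have hs : 0 < s := Nat.div_pos (Nat.le_of_dvd hr hkr) hk
  have hteq : n * k / r = n / s := by
    rw [← hks, mul_comm n k, Nat.mul_div_mul_left _ _ hk]
  set t := n / s with htdef
  have hst : s ∣ n := hrkn
  have hnst : n = s * t := (Nat.mul_div_cancel' hst).symm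
  have ht : 0 < t := by
    rcases Nat.eq_zero_or_pos t with h | h
    · rw [h, mul_zero] at hnst; omega
    · exact h
  have hQ : Fintype.card F = p ^ s := by rw [hF, ← hks, pow_mul]
  rcases Nat.lt_or_ge n 2 with hn1 | hn2
  -- n = 1 case
  · have hn1' : n = 1 := by omega
    subst hn1'
    have hσ1 : σ = 1 := orderOf_eq_one_iff.mp hord
    have hallone : ∀ g : G, g = 1 := by
      intro g
      obtain ⟨z, hz⟩ := hgen g
      rw [← hz]
      simp [hσ1]
    have hψid : ∀ (ψ : MulAut G) (g : G), ψ g = g := by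
      intro ψ g; rw [hallone (ψ g), hallone g]
    have hallcob : ∀ w : G → G → Fˣ, IsTwoCocycle η w → IsTwoCoboundary η w := by
      intro w _
      refine ⟨fun _ => w 1 1, fun g h => ?_⟩
      have hg := hallone g
      have hh := hallone h
      subst hg; subst hh
      have h1 : η 1 ((w 1 1 : Fˣ) : F) = ((w 1 1 : Fˣ) : F) := by rw [map_one]; rfl
      rw [one_mul, h1]
      field_simp
      simp
    have hpart1 : ∀ ψ : MulAut G, (∀ g : G, η (ψ g) = η g) →
        ∀ f : G → G → Fˣ, IsTwoCocycle η f →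
          Cohomologous η (fun g g' => f (ψ g) (ψ g')) f := by
      intro ψ hψ f hf
      refine ⟨fun _ => 1, fun g h => ?_⟩
      dsimp only
      rw [hψid ψ g, hψid ψ h]
      simp
    refine ⟨hpart1, ?_⟩
    have hs1 : s = 1 := Nat.dvd_one.mp hrkn
    have hrk : r = k := by rw [← hks, hs1, mul_one]
    have hmval : Nat.gcd (q ^ k - 1) (1 * k / r) = 1 := by
      rw [one_mul, hrk, Nat.div_self hk, Nat.gcd_one_right]
    rw [hmval]
    rw [Nat.card_eq_one_iff_unique]
    have hH2sub : ∀ x y : H2 η, x = y := by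
      intro x y
      induction x using QuotientGroup.induction_on with
      | _ a =>
      induction y using QuotientGroup.induction_on with
      | _ b =>
      apply (QuotientGroup.eq).mpr
      rw [Subgroup.mem_subgroupOf]
      exact hallcob _ ((twoCocycles η).mul_mem ((twoCocycles η).inv_mem a.2) b.2)
    constructor
    · constructor
      intro x y
      induction x using Quot.ind with
      | _ a =>
      induction y using Quot.ind with
      | _ b =>
      exact congrArg _ (hH2sub a b)
    · exact ⟨Quot.mk _ (1 : H2 η)⟩
  -- n ≥ 2 case
  · have hn0 : 0 < n := by omega
    set NM := (cyclicNormHom η σ n).range with hNMdef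
    have hcard := card_image_eq σ η p s t n hp2 hs ht hnst hη hn0 hord hgen hQ
    have hpowmem : ∀ b ∈ fixedUnits η, b ^ (Nat.gcd (p-1) t) ∈ NM := by
      intro b hb
      have hb' : QuotientGroup.mk' NM b ∈ (fixedUnits η).map (QuotientGroup.mk' NM) :=
        Subgroup.mem_map_of_mem _ hb
      have h1 := subgroup_pow_card hb'
      rw [hcard, ← map_pow] at h1
      exact (QuotientGroup.eq_one_iff _).mp h1
    have hpow : ∀ b ∈ fixedUnits η, ∀ ψ : MulAut G, (∀ g : G, η (ψ g) = η g) →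
        b ^ (ind (show 0 < n by omega) hord hgen (ψ σ) - 1) ∈ (cyclicNormHom η σ n).range := by
      intro b hb ψ hψc
      set u := ind (show 0 < n by omega) hord hgen (ψ σ) with hudef
      rcases Nat.eq_zero_or_pos u with hu0 | hu1
      · rw [hu0]
        simpa using (one_mem NM)
      · have hψσ : ψ σ = σ ^ u := (pow_ind _ hord hgen _).symm
        have hcompat : η (σ ^ u) = η σ := by rw [← hψσ]; exact hψc σ
        have hpoweq : ∀ x : F, x ^ p ^ u = x ^ p := by
          intro x
          rw [← eta_pow hη u x, hcompat, hη]
        obtain ⟨g₁, hg₁⟩ := IsCyclic.exists_generator (α := Fˣ)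
        have hcardU : Nat.card Fˣ = p ^ s - 1 := by
          rw [Nat.card_eq_fintype_card, Fintype.card_units, hQ]
        have hordg : orderOf g₁ = p ^ s - 1 := by
          rw [orderOf_eq_card_of_forall_mem_zpowers hg₁, hcardU]
        have hg₁eq : g₁ ^ p ^ u = g₁ ^ p := Units.ext (by push_cast; exact hpoweq _)
        have hmodeq : p ^ u ≡ p [MOD p ^ s - 1] := by
          have := pow_eq_pow_iff_modEq.mp hg₁eq
          rwa [hordg] at this
        have hps1 : 1 ≤ p ^ s := Nat.one_le_pow _ _ (by omega)
        have hcop : Nat.gcd (p ^ s - 1) p = 1 := by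
          have h1 : Nat.gcd (p ^ s - 1) p ∣ p ^ s :=
            (Nat.gcd_dvd_right _ _).trans (dvd_pow_self p (by omega))
          have h2 : Nat.gcd (p ^ s - 1) p ∣ p ^ s - 1 := Nat.gcd_dvd_left _ _
          have h3 : Nat.gcd (p ^ s - 1) p ∣ 1 := by
            have h4 : p ^ s - (p ^ s - 1) = 1 := by omega
            have h5 := Nat.dvd_sub h1 h2
            rwa [h4] at h5
          exact Nat.dvd_one.mp h3
        have hmm : p ^ (u - 1) ≡ 1 [MOD p ^ s - 1] := by
          have h5 : p * p ^ (u - 1) ≡ p * 1 [MOD p ^ s - 1] := by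
            rw [mul_one]
            calc p * p ^ (u - 1) = p ^ u := by
                  rw [← pow_succ']; congr 1; omega
              _ ≡ p [MOD p ^ s - 1] := hmodeq
          exact Nat.ModEq.cancel_left_of_coprime hcop h5
        have hdvd : (p ^ s - 1) ∣ p ^ (u - 1) - 1 :=
          (Nat.modEq_iff_dvd' (Nat.one_le_pow _ _ (by omega))).mp hmm.symm
        have hsdvd : s ∣ u - 1 := pows_dvd hp2 hs hdvd
        have hm' : Nat.gcd (p - 1) t ∣ s := hteq ▸ hm
        obtain ⟨c, hc⟩ := hm'.trans hsdvd
        rw [hc, pow_mul]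
        exact Subgroup.pow_mem NM (hpowmem b hb) c
    have hpart1 := trivial_action hn2 hord hgen hpow
    refine ⟨hpart1, ?_⟩
    have hlift : ∀ c₁ c₂ : H2 η, pullbackRel η c₁ c₂ → c₁ = c₂ := by
      rintro c₁ c₂ ⟨ψ, hψc, f, hf, hf', h1, h2⟩
      rw [h1, h2]
      apply (QuotientGroup.eq).mpr
      rw [Subgroup.mem_subgroupOf]
      have h3 := hpart1 ψ hψc f hf
      have heq2 : ((⟨f, hf⟩ : twoCocycles η)⁻¹ * ⟨fun g g' => f (ψ g) (ψ g'), hf'⟩ :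
          twoCocycles η).1 = fun g g' => f (ψ g) (ψ g') * (f g g')⁻¹ := by
        funext g h
        show (f g h)⁻¹ * f (ψ g) (ψ h) = f (ψ g) (ψ h) * (f g h)⁻¹
        exact mul_comm _ _
      show ((⟨f, hf⟩ : twoCocycles η)⁻¹ * ⟨fun g g' => f (ψ g) (ψ g'), hf'⟩ :
          twoCocycles η).1 ∈ twoCoboundaries η
      rw [heq2]
      exact h3
    have hequiv : Quot (pullbackRel η) ≃ H2 η :=
      { toFun := Quot.lift (fun c => c) (fun a b hab => hlift a b hab)
        invFun := fun c => Quot.mk _ c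
        left_inv := by intro x; induction x using Quot.ind with | _ a => rfl
        right_inv := fun c => rfl }
    rw [Nat.card_congr hequiv, card_H2 hn2 hord hgen, hteq]
    exact hcard
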